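/- For any finite directed graph G (possibly containing directed cycles) and any acyclification G' of G, the three independence models coincide: IM_σ(G) = IM_σ(G') = IM_d(G'). That is, for all subsets A, B, C of the vertex set, A is σ-separated from B by C in G if and only if A is σ-separated from B by C in G', if and only if A is d-separated from B by C in G'. -/

import Mathlib

/-!
Directed (possibly cyclic) graphs on a vertex type `V` are given by their
edge relation `E : V → V → Prop`.
-/

/-- `Anc E i j` : `i` is an ancestor of `j` in the graph with edge relation `E`,
i.e. there is a directed path (possibly of length 0) from `i` to `j`. -/
def Anc {V : Type*} (E : V → V → Prop) (i j : V) : Prop :=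
  Relation.ReflTransGen E i j

/-- `InSC E i j` : `i` belongs to the strongly connected component of `j`,
i.e. `i ∈ AN_G(j) ∩ DE_G(j)`. -/
def InSC {V : Type*} (E : V → V → Prop) (i j : V) : Prop :=
  Anc E i j ∧ Anc E j i

/-- A directed graph is acyclic if it contains no directed cycle. -/
def Acyclic {V : Type*} (E : V → V → Prop) : Prop :=
  ∀ i, ¬ Relation.TransGen E i i

/-- `G' = (V, E')` is an acyclification of `G = (V, E)`:
`G'` is acyclic; for `i ∉ SC_G(j)`, `i → j ∈ E'` iff some `k ∈ SC_G(j)` has `i → k ∈ E`;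
and for distinct `i ∈ SC_G(j)`, `i → j ∈ E'` or `j → i ∈ E'`. -/
def IsAcyclification {V : Type*} (E E' : V → V → Prop) : Prop :=
  Acyclic E' ∧
  (∀ i j, ¬ InSC E i j → (E' i j ↔ ∃ k, InSC E k j ∧ E i k)) ∧
  (∀ i j, i ≠ j → InSC E i j → (E' i j ∨ E' j i))

/-- A walk in the graph with edge relation `E`: a sequence of `len + 1` vertices
`v 0, …, v len` together with edge directions `d 0, …, d (len - 1)`;
if `d k = true` the `k`-th edge is `v k → v (k+1) ∈ E`, otherwise it is
`v (k+1) → v k ∈ E`.  Vertices and edges may repeat. -/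
structure Walk {V : Type*} (E : V → V → Prop) where
  len : ℕ
  v : ℕ → V
  d : ℕ → Bool
  valid : ∀ k, k < len →
    (d k = true → E (v k) (v (k + 1))) ∧ (d k = false → E (v (k + 1)) (v k))

/-- The interior node at position `k` (with `0 < k < w.len`) is a collider on the
walk: both adjacent edges point into it. -/
def IsCollider {V : Type*} {E : V → V → Prop} (w : Walk E) (k : ℕ) : Prop :=
  w.d (k - 1) = true ∧ w.d k = false

/-- `x` is an ancestor of the set `C`. -/
def AncOfSet {V : Type*} (E : V → V → Prop) (C : Set V) (x : V) : Prop :=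
  ∃ c ∈ C, Anc E x c

/-- The walk `w` is d-blocked by the set `C`. -/
def DBlocked {V : Type*} (E : V → V → Prop) (C : Set V) (w : Walk E) : Prop :=
  w.v 0 ∈ C ∨ w.v w.len ∈ C ∨
  ∃ k, 0 < k ∧ k < w.len ∧
    ((IsCollider w k ∧ ¬ AncOfSet E C (w.v k)) ∨
     (¬ IsCollider w k ∧ w.v k ∈ C))

/-- The walk `w` is σ-blocked by the set `C`. -/
def SigmaBlocked {V : Type*} (E : V → V → Prop) (C : Set V) (w : Walk E) : Prop :=
  w.v 0 ∈ C ∨ w.v w.len ∈ C ∨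
  ∃ k, 0 < k ∧ k < w.len ∧
    ((IsCollider w k ∧ ¬ AncOfSet E C (w.v k)) ∨
     (w.v k ∈ C ∧
       ((w.d (k - 1) = true ∧ w.d k = true ∧ ¬ InSC E (w.v (k + 1)) (w.v k)) ∨
        (w.d (k - 1) = false ∧ w.d k = false ∧ ¬ InSC E (w.v (k - 1)) (w.v k)) ∨
        (w.d (k - 1) = false ∧ w.d k = true ∧
          (¬ InSC E (w.v (k - 1)) (w.v k) ∨ ¬ InSC E (w.v (k + 1)) (w.v k))))))

/-- `A` is d-separated from `B` by `C` in the graph with edge relation `E`. -/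
def DSep {V : Type*} (E : V → V → Prop) (A B C : Set V) : Prop :=
  ∀ w : Walk E, w.v 0 ∈ A → w.v w.len ∈ B → DBlocked E C w

/-- `A` is σ-separated from `B` by `C` in the graph with edge relation `E`. -/
def SigmaSep {V : Type*} (E : V → V → Prop) (A B C : Set V) : Prop :=
  ∀ w : Walk E, w.v 0 ∈ A → w.v w.len ∈ B → SigmaBlocked E C w

/-- The independence model under d-separation. -/
def IMd {V : Type*} (E : V → V → Prop) : Set (Set V × Set V × Set V) :=
  {t | DSep E t.1 t.2.1 t.2.2}

/-- The independence model under σ-separation. -/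
def IMsigma {V : Type*} (E : V → V → Prop) : Set (Set V × Set V × Set V) :=
  {t | SigmaSep E t.1 t.2.1 t.2.2}


/-! ### Auxiliary infrastructure -/

section Aux

variable {V : Type*}

namespace Walk

/-- The length-0 walk at a vertex. -/
def nil (E : V → V → Prop) (x : V) : Walk E :=
  ⟨0, fun _ => x, fun _ => true, fun k hk => absurd hk (Nat.not_lt_zero k)⟩

@[simp] lemma nil_len (E : V → V → Prop) (x : V) : (nil E x).len = 0 := rfl
@[simp] lemma nil_v (E : V → V → Prop) (x : V) (k : ℕ) : (nil E x).v k = x := rfl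

/-- Prepend an edge to a walk. -/
def cons {E : V → V → Prop} (x : V) (b : Bool) (w : Walk E)
    (h1 : b = true → E x (w.v 0)) (h2 : b = false → E (w.v 0) x) : Walk E :=
  ⟨w.len + 1, fun k => Nat.casesOn k x w.v, fun k => Nat.casesOn k b w.d, by
    intro k hk
    cases k with
    | zero => exact ⟨h1, h2⟩
    | succ k => exact w.valid k (Nat.lt_of_succ_lt_succ hk)⟩

variable {E : V → V → Prop} {x : V} {b : Bool} {w : Walk E}
  {h1 : b = true → E x (w.v 0)} {h2 : b = false → E (w.v 0) x}

@[simp] lemma cons_len : (cons x b w h1 h2).len = w.len + 1 := rfl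
@[simp] lemma cons_v_zero : (cons x b w h1 h2).v 0 = x := rfl
@[simp] lemma cons_v_succ (k : ℕ) : (cons x b w h1 h2).v (k + 1) = w.v k := rfl
@[simp] lemma cons_d_zero : (cons x b w h1 h2).d 0 = b := rfl
@[simp] lemma cons_d_succ (k : ℕ) : (cons x b w h1 h2).d (k + 1) = w.d k := rfl

lemma cons_last : (cons x b w h1 h2).v ((cons x b w h1 h2).len) = w.v w.len := rfl

/-- The tail of a walk (drop the first edge). -/
def tail {E : V → V → Prop} (w : Walk E) : Walk E :=
  ⟨w.len - 1, fun k => w.v (k + 1), fun k => w.d (k + 1), by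
    intro k hk
    exact w.valid (k + 1) (by omega)⟩

@[simp] lemma tail_len (w : Walk E) : w.tail.len = w.len - 1 := rfl
@[simp] lemma tail_v (w : Walk E) (k : ℕ) : w.tail.v k = w.v (k + 1) := rfl
@[simp] lemma tail_d (w : Walk E) (k : ℕ) : w.tail.d k = w.d (k + 1) := rfl

end Walk

/-- The "bad interior node" condition for d-blocking. -/
def DBad (E : V → V → Prop) (C : Set V) (w : Walk E) (k : ℕ) : Prop :=
  (IsCollider w k ∧ ¬ AncOfSet E C (w.v k)) ∨
  (¬ IsCollider w k ∧ w.v k ∈ C)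

/-- The "bad interior node" condition for σ-blocking. -/
def SBad (E : V → V → Prop) (C : Set V) (w : Walk E) (k : ℕ) : Prop :=
  (IsCollider w k ∧ ¬ AncOfSet E C (w.v k)) ∨
  (w.v k ∈ C ∧
    ((w.d (k - 1) = true ∧ w.d k = true ∧ ¬ InSC E (w.v (k + 1)) (w.v k)) ∨
     (w.d (k - 1) = false ∧ w.d k = false ∧ ¬ InSC E (w.v (k - 1)) (w.v k)) ∨
     (w.d (k - 1) = false ∧ w.d k = true ∧
       (¬ InSC E (w.v (k - 1)) (w.v k) ∨ ¬ InSC E (w.v (k + 1)) (w.v k)))))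

lemma DBlocked_iff (E : V → V → Prop) (C : Set V) (w : Walk E) :
    DBlocked E C w ↔ (w.v 0 ∈ C ∨ w.v w.len ∈ C ∨ ∃ k, 0 < k ∧ k < w.len ∧ DBad E C w k) :=
  Iff.rfl

lemma SigmaBlocked_iff (E : V → V → Prop) (C : Set V) (w : Walk E) :
    SigmaBlocked E C w ↔ (w.v 0 ∈ C ∨ w.v w.len ∈ C ∨ ∃ k, 0 < k ∧ k < w.len ∧ SBad E C w k) :=
  Iff.rfl

/-- Interior d-openness. -/
def IntOpenD (E : V → V → Prop) (C : Set V) (w : Walk E) : Prop :=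
  ∀ k, 0 < k → k < w.len → ¬ DBad E C w k

/-- Interior σ-openness. -/
def IntOpenS (E : V → V → Prop) (C : Set V) (w : Walk E) : Prop :=
  ∀ k, 0 < k → k < w.len → ¬ SBad E C w k

lemma not_DBlocked_iff (E : V → V → Prop) (C : Set V) (w : Walk E) :
    ¬ DBlocked E C w ↔ (w.v 0 ∉ C ∧ w.v w.len ∉ C ∧ IntOpenD E C w) := by
  rw [DBlocked_iff]
  constructor
  · intro h
    exact ⟨fun hc => h (Or.inl hc), fun hc => h (Or.inr (Or.inl hc)),
      fun k hk1 hk2 hb => h (Or.inr (Or.inr ⟨k, hk1, hk2, hb⟩))⟩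
  · rintro ⟨hx, hy, hint⟩ (hc | hc | ⟨k, hk1, hk2, hb⟩)
    · exact hx hc
    · exact hy hc
    · exact hint k hk1 hk2 hb

lemma not_SigmaBlocked_iff (E : V → V → Prop) (C : Set V) (w : Walk E) :
    ¬ SigmaBlocked E C w ↔ (w.v 0 ∉ C ∧ w.v w.len ∉ C ∧ IntOpenS E C w) := by
  rw [SigmaBlocked_iff]
  constructor
  · intro h
    exact ⟨fun hc => h (Or.inl hc), fun hc => h (Or.inr (Or.inl hc)),
      fun k hk1 hk2 hb => h (Or.inr (Or.inr ⟨k, hk1, hk2, hb⟩))⟩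
  · rintro ⟨hx, hy, hint⟩ (hc | hc | ⟨k, hk1, hk2, hb⟩)
    · exact hx hc
    · exact hy hc
    · exact hint k hk1 hk2 hb

section ConsLemmas

variable {E : V → V → Prop} {C : Set V} {x : V} {b : Bool} {w : Walk E}
  {h1 : b = true → E x (w.v 0)} {h2 : b = false → E (w.v 0) x}

lemma DBad_cons_one :
    DBad E C (Walk.cons x b w h1 h2) 1 ↔
      (((b = true ∧ w.d 0 = false) ∧ ¬ AncOfSet E C (w.v 0)) ∨
       (¬ (b = true ∧ w.d 0 = false) ∧ w.v 0 ∈ C)) :=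
  Iff.rfl

lemma SBad_cons_one :
    SBad E C (Walk.cons x b w h1 h2) 1 ↔
      (((b = true ∧ w.d 0 = false) ∧ ¬ AncOfSet E C (w.v 0)) ∨
       (w.v 0 ∈ C ∧
         ((b = true ∧ w.d 0 = true ∧ ¬ InSC E (w.v 1) (w.v 0)) ∨
          (b = false ∧ w.d 0 = false ∧ ¬ InSC E x (w.v 0)) ∨
          (b = false ∧ w.d 0 = true ∧
            (¬ InSC E x (w.v 0) ∨ ¬ InSC E (w.v 1) (w.v 0)))))) :=
  Iff.rfl

lemma SBad_cons_succ_succ (k : ℕ) :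
    SBad E C (Walk.cons x b w h1 h2) (k + 2) ↔ SBad E C w (k + 1) :=
  Iff.rfl

lemma DBad_cons_succ_succ (k : ℕ) :
    DBad E C (Walk.cons x b w h1 h2) (k + 2) ↔ DBad E C w (k + 1) :=
  Iff.rfl

lemma IntOpenS_cons (hw : IntOpenS E C w)
    (hj : 0 < w.len → ¬ SBad E C (Walk.cons x b w h1 h2) 1) :
    IntOpenS E C (Walk.cons x b w h1 h2) := by
  intro k hk1 hk2
  match k with
  | 0 => omega
  | 1 => exact hj (by simpa using hk2)
  | (k + 2) =>
    rw [SBad_cons_succ_succ]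
    exact hw (k + 1) (by omega) (by simp at hk2; omega)

lemma IntOpenD_cons (hw : IntOpenD E C w)
    (hj : 0 < w.len → ¬ DBad E C (Walk.cons x b w h1 h2) 1) :
    IntOpenD E C (Walk.cons x b w h1 h2) := by
  intro k hk1 hk2
  match k with
  | 0 => omega
  | 1 => exact hj (by simpa using hk2)
  | (k + 2) =>
    rw [DBad_cons_succ_succ]
    exact hw (k + 1) (by omega) (by simp at hk2; omega)

lemma IntOpenD_tail {w : Walk E} (hw : IntOpenD E C w) : IntOpenD E C w.tail := by
  intro k hk1 hk2
  obtain ⟨m, rfl⟩ : ∃ m, k = m + 1 := ⟨k - 1, by omega⟩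
  have : DBad E C w.tail (m + 1) ↔ DBad E C w (m + 2) := Iff.rfl
  rw [this]
  exact hw (m + 2) (by omega) (by simp at hk2; omega)

end ConsLemmas

end Aux

section SC

variable {V : Type*} {E E' : V → V → Prop} {C : Set V}

lemma InSC.refl (E : V → V → Prop) (a : V) : InSC E a a :=
  ⟨Relation.ReflTransGen.refl, Relation.ReflTransGen.refl⟩

lemma InSC.symm {a b : V} (h : InSC E a b) : InSC E b a := ⟨h.2, h.1⟩

lemma InSC.trans {a b c : V} (h : InSC E a b) (h' : InSC E b c) : InSC E a c :=
  ⟨h.1.trans h'.1, h'.2.trans h.2⟩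

/-- Any `E'`-edge gives an `E`-directed path. -/
lemma anc_of_edge' (h : IsAcyclification E E') {a b : V} (e : E' a b) : Anc E a b := by
  by_cases hin : InSC E a b
  · exact hin.1
  · obtain ⟨k, hk, hek⟩ := (h.2.1 a b hin).mp e
    exact (Relation.ReflTransGen.single hek).trans hk.1

/-- `E'`-ancestry implies `E`-ancestry. -/
lemma anc'_to_anc (h : IsAcyclification E E') {a b : V} (hab : Anc E' a b) : Anc E a b := by
  induction hab with
  | refl => exact Relation.ReflTransGen.refl
  | tail _ e ih => exact ih.trans (anc_of_edge' h e)

lemma ancOfSet'_to_ancOfSet (h : IsAcyclification E E') {x : V}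
    (hx : AncOfSet E' C x) : AncOfSet E C x := by
  obtain ⟨c, hc, hanc⟩ := hx
  exact ⟨c, hc, anc'_to_anc h hanc⟩

/-- In a strongly connected component, there is a `G'`-least element. -/
lemma exists_min [Fintype V] (h : IsAcyclification E E') (a : V) :
    ∃ m, InSC E m a ∧ ∀ s, InSC E s m → s ≠ m → E' m s := by
  have hirr : IsIrrefl V (Relation.TransGen E') := ⟨fun x hx => h.1 x hx⟩
  have htr : IsTrans V (Relation.TransGen E') := ⟨fun _ _ _ => Relation.TransGen.trans⟩
  have hwf := Finite.wellFounded_of_trans_of_irrefl (Relation.TransGen E')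
  obtain ⟨m, hm, hmin⟩ := hwf.has_min {s | InSC E s a} ⟨a, InSC.refl E a⟩
  refine ⟨m, hm, fun s hsm hne => ?_⟩
  have hsa : InSC E s a := hsm.trans hm
  rcases h.2.2 m s (Ne.symm hne) (hsm.symm) with he | he
  · exact he
  · exact absurd (Relation.TransGen.single he) (hmin s hsa)

/-- key lemma: if `x` is an `E`-ancestor of `c`, then the `G'`-least element of
`SC(x)` is an `E'`-ancestor of `c`. -/
lemma min_anc' [Fintype V] (h : IsAcyclification E E') {x c : V} (hxc : Anc E x c) :
    ∀ m, InSC E m x → (∀ s, InSC E s m → s ≠ m → E' m s) → Anc E' m c := by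
  induction hxc using Relation.ReflTransGen.head_induction_on with
  | refl =>
    intro m hm hmin
    by_cases hmc : m = c
    · exact hmc ▸ Relation.ReflTransGen.refl
    · exact Relation.ReflTransGen.single (hmin c hm.symm (Ne.symm hmc))
  | head e hrtg ih =>
    rename_i a b'
    intro m hm hmin
    by_cases hin : InSC E b' a
    · exact ih m (hm.trans hin.symm) hmin
    · obtain ⟨m', hm', hmin'⟩ := exists_min h b'
      have he1 : E' a m' := by
        have hnin : ¬ InSC E a m' := by
          intro hcon
          exact hin ((hcon.trans hm').symm)
        exact (h.2.1 a m' hnin).mpr ⟨b', hm'.symm, e⟩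
      have h2 : Anc E' m' c := ih m' hm' hmin'
      have h0 : Anc E' m a := by
        by_cases hma : m = a
        · exact hma ▸ Relation.ReflTransGen.refl
        · exact Relation.ReflTransGen.single (hmin a hm.symm (Ne.symm hma))
      exact (h0.trans (Relation.ReflTransGen.single he1)).trans h2

end SC

/-! ### σ-separation = d-separation in an acyclic graph -/

section AcyclicEquiv

variable {V : Type*} {E' : V → V → Prop} {C : Set V}

lemma not_inSC_of_edge (hac : Acyclic E') {a b : V} (e : E' a b) : ¬ InSC E' b a :=
  fun hin => hac a (Relation.TransGen.head' e hin.1)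

lemma SBad_iff_DBad_acyclic (hac : Acyclic E') (w : Walk E') {k : ℕ}
    (hk1 : 0 < k) (hk2 : k < w.len) : SBad E' C w k ↔ DBad E' C w k := by
  obtain ⟨m, rfl⟩ : ∃ m, k = m + 1 := ⟨k - 1, by omega⟩
  constructor
  · rintro (hcol | ⟨hmem, hpat⟩)
    · exact Or.inl hcol
    · refine Or.inr ⟨?_, hmem⟩
      rintro ⟨hc1, hc2⟩
      rcases hpat with ⟨p1, p2, _⟩ | ⟨p1, p2, _⟩ | ⟨p1, p2, _⟩
      · simp [hc2] at p2
      · simp only [Nat.add_sub_cancel] at hc1; simp [hc1] at p1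
      · simp [hc2] at p2
  · rintro (hcol | ⟨hncol, hmem⟩)
    · exact Or.inl hcol
    · refine Or.inr ⟨hmem, ?_⟩
      have hvalid := w.valid (m + 1) hk2
      have hvalid' := w.valid m (by omega)
      cases hd1 : w.d ((m + 1) - 1) <;> cases hd2 : w.d (m + 1)
      · -- (false, false)
        refine Or.inr (Or.inl ⟨rfl, rfl, ?_⟩)
        have he : E' (w.v (m + 1)) (w.v m) := hvalid'.2 hd1
        exact not_inSC_of_edge hac he
      · -- (false, true)
        refine Or.inr (Or.inr ⟨rfl, rfl, Or.inl ?_⟩)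
        have he : E' (w.v (m + 1)) (w.v m) := hvalid'.2 hd1
        exact not_inSC_of_edge hac he
      · -- (true, false) : collider, contradiction
        exact absurd ⟨hd1, hd2⟩ hncol
      · -- (true, true)
        refine Or.inl ⟨rfl, rfl, ?_⟩
        have he : E' (w.v (m + 1)) (w.v (m + 2)) := hvalid.1 hd2
        exact not_inSC_of_edge hac he

lemma SigmaBlocked_iff_DBlocked_acyclic (hac : Acyclic E') (w : Walk E') :
    SigmaBlocked E' C w ↔ DBlocked E' C w := by
  rw [SigmaBlocked_iff, DBlocked_iff]
  refine or_congr Iff.rfl (or_congr Iff.rfl (exists_congr fun k => ?_))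
  constructor
  · rintro ⟨hk1, hk2, hb⟩
    exact ⟨hk1, hk2, (SBad_iff_DBad_acyclic hac w hk1 hk2).mp hb⟩
  · rintro ⟨hk1, hk2, hb⟩
    exact ⟨hk1, hk2, (SBad_iff_DBad_acyclic hac w hk1 hk2).mpr hb⟩

end AcyclicEquiv

/-! ### Direction 1: a d-open walk in `G'` yields a σ-open walk in `G` -/

section Dir1

variable {V : Type*} {E E' : V → V → Prop} {C : Set V}

/-- Head condition allowing to prepend an edge pointing *into* the front node. -/
def HT (E : V → V → Prop) (C : Set V) (W : Walk E) : Prop :=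
  0 < W.len →
    ((W.d 0 = false → AncOfSet E C (W.v 0)) ∧
     (W.d 0 = true → (W.v 0 ∉ C ∨ InSC E (W.v 1) (W.v 0))))

/-- Head condition allowing to prepend an edge pointing *out of* the front node
(towards a node in the SC of `b`). -/
def HB (E : V → V → Prop) (C : Set V) (W : Walk E) (b : V) : Prop :=
  0 < W.len → (W.v 0 ∉ C ∨ (W.d 0 = false ∧ InSC E (W.v 0) b))

lemma pp_fwd {a b : V} (h : Relation.ReflTransGen E a b) :
    ∀ (j : V), Anc E b j → Anc E j a →
    ∀ W : Walk E, W.v 0 = b → IntOpenS E C W → HT E C W →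
    ∃ W' : Walk E, W'.v 0 = a ∧ W'.v W'.len = W.v W.len ∧ IntOpenS E C W' ∧ HT E C W' ∧
      (0 < W.len → 0 < W'.len) ∧
      ((a = b ∧ W'.len = W.len ∧ (0 < W.len → W'.d 0 = W.d 0)) ∨
        (0 < W'.len ∧ W'.d 0 = true)) := by
  induction h with
  | refl =>
    intro j _ _ W hW0 hop hht
    exact ⟨W, hW0, rfl, hop, hht, fun h => h, Or.inl ⟨rfl, rfl, fun _ => rfl⟩⟩
  | @tail c b hrtg e ih =>
    intro j hbj hja W hW0 hop hht
    have h1 : (true : Bool) = true → E c (W.v 0) := fun _ => by rw [hW0]; exact e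
    have h2 : (true : Bool) = false → E (W.v 0) c := fun hf => by simp at hf
    have hjunc : 0 < W.len → ¬ SBad E C (Walk.cons c true W h1 h2) 1 := by
      intro hlen hbad
      rw [SBad_cons_one] at hbad
      obtain ⟨hdf, hdt⟩ := hht hlen
      rcases hbad with ⟨⟨_, hf⟩, hna⟩ | ⟨hmem, hpat⟩
      · exact hna (hdf hf)
      · rcases hpat with ⟨_, ht', hnin⟩ | ⟨hf, _, _⟩ | ⟨hf, _, _⟩
        · rcases hdt ht' with hnc | hin
          · exact hnc hmem
          · exact hnin hin
        · simp at hf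
        · simp at hf
    have hopc : IntOpenS E C (Walk.cons c true W h1 h2) := IntOpenS_cons hop hjunc
    have hhtc : HT E C (Walk.cons c true W h1 h2) := by
      intro _
      refine ⟨fun hf => by simp at hf, fun _ => Or.inr ?_⟩
      show InSC E (W.v 0) c
      rw [hW0]
      exact ⟨hbj.trans (hja.trans hrtg), Relation.ReflTransGen.single e⟩
    obtain ⟨W', h0, hend, hop', hht', hpos, hdisj⟩ :=
      ih j ((Relation.ReflTransGen.single e).trans hbj) hja
        (Walk.cons c true W h1 h2) rfl hopc hhtc
    refine ⟨W', h0, by rw [hend]; rfl, hop', hht', fun _ => hpos (by simp), Or.inr ?_⟩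
    rcases hdisj with ⟨_, hlen', hd'⟩ | hfin
    · refine ⟨by rw [hlen']; simp, ?_⟩
      rw [hd' (by simp)]; rfl
    · exact hfin

lemma pp_bwd {a b : V} (h : Relation.ReflTransGen E a b) :
    Anc E b a →
    ∀ W : Walk E, W.v 0 = a → IntOpenS E C W → HB E C W b →
    ∃ W' : Walk E, W'.v 0 = b ∧ W'.v W'.len = W.v W.len ∧ IntOpenS E C W' ∧
      (0 < W.len → 0 < W'.len) ∧
      ((a = b ∧ W'.len = W.len ∧ (0 < W.len → W'.d 0 = W.d 0)) ∨
        (0 < W'.len ∧ W'.d 0 = false)) := by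
  induction h using Relation.ReflTransGen.head_induction_on with
  | refl =>
    intro _ W hW0 hop _
    exact ⟨W, hW0, rfl, hop, fun h => h, Or.inl ⟨rfl, rfl, fun _ => rfl⟩⟩
  | @head a c e hrtg ih =>
    intro hba W hW0 hop hhb
    have h1 : (false : Bool) = true → E c (W.v 0) := fun hf => by simp at hf
    have h2 : (false : Bool) = false → E (W.v 0) c := fun _ => by rw [hW0]; exact e
    have hjunc : 0 < W.len → ¬ SBad E C (Walk.cons c false W h1 h2) 1 := by
      intro hlen hbad
      rw [SBad_cons_one] at hbad
      rcases hbad with ⟨⟨hf, _⟩, _⟩ | ⟨hmem, hpat⟩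
      · simp at hf
      · rcases hhb hlen with hnc | ⟨hd0f, hinab⟩
        · exact hnc hmem
        · rcases hpat with ⟨hf, _, _⟩ | ⟨_, _, hnin⟩ | ⟨_, hd0t, _⟩
          · simp at hf
          · refine hnin ?_
            show InSC E c (W.v 0)
            rw [hW0]
            exact ⟨hrtg.trans hba, Relation.ReflTransGen.single e⟩
          · rw [hd0f] at hd0t; simp at hd0t
    have hopc : IntOpenS E C (Walk.cons c false W h1 h2) := IntOpenS_cons hop hjunc
    have hhbc : HB E C (Walk.cons c false W h1 h2) b := by
      intro _
      refine Or.inr ⟨rfl, ?_⟩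
      show InSC E c b
      exact ⟨hrtg, hba.trans (Relation.ReflTransGen.single e)⟩
    obtain ⟨W', h0, hend, hop', hpos, hdisj⟩ :=
      ih (hba.trans (Relation.ReflTransGen.single e)) (Walk.cons c false W h1 h2) rfl hopc hhbc
    refine ⟨W', h0, by rw [hend]; rfl, hop', fun _ => hpos (by simp), Or.inr ?_⟩
    rcases hdisj with ⟨_, hlen', hd'⟩ | hfin
    · refine ⟨by rw [hlen']; simp, ?_⟩
      rw [hd' (by simp)]; rfl
    · exact hfin

lemma dir1 (h : IsAcyclification E E') :
    ∀ (n : ℕ) (w' : Walk E'), w'.len = n → IntOpenD E' C w' →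
    ∃ W : Walk E, W.v 0 = w'.v 0 ∧ W.v W.len = w'.v w'.len ∧ IntOpenS E C W ∧
      (w'.len = 0 → W.len = 0) ∧ (0 < w'.len → 0 < W.len ∧ W.d 0 = w'.d 0) := by
  intro n
  induction n with
  | zero =>
    intro w' hlen _
    refine ⟨Walk.nil E (w'.v 0), rfl, by rw [hlen]; rfl, ?_, fun _ => rfl, ?_⟩
    · intro k hk1 hk2 _; simp at hk2
    · intro h0; rw [hlen] at h0; omega
  | succ n ih =>
    intro w' hlen hop
    have htlen : w'.tail.len = n := by simp [hlen]
    obtain ⟨W₁, hW₁0, hW₁end, hW₁op, hW₁nil, hW₁pos⟩ := ih w'.tail htlen (IntOpenD_tail hop)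
    have hW₁0' : W₁.v 0 = w'.v 1 := hW₁0
    have hlen' : 0 < w'.len := by omega
    have hend1 : W₁.v W₁.len = w'.v w'.len := by
      rw [hW₁end]
      show w'.v (w'.len - 1 + 1) = w'.v w'.len
      congr 1
      omega
    have hvalid0 := w'.valid 0 hlen'
    have F1 : 0 < w'.tail.len → ¬ DBad E' C w' 1 := by
      intro ht
      exact hop 1 (by omega) (by simp at ht; omega)
    have hcolAnc : 0 < w'.tail.len → (w'.d 0 = true ∧ w'.d 1 = false) →
        AncOfSet E' C (w'.v 1) := by
      intro ht hc
      by_contra hna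
      exact F1 ht (Or.inl ⟨hc, hna⟩)
    have hnotC : 0 < w'.tail.len → ¬(w'.d 0 = true ∧ w'.d 1 = false) → w'.v 1 ∉ C :=
      fun ht hnc hmem => F1 ht (Or.inr ⟨hnc, hmem⟩)
    have hW₁d : 0 < w'.tail.len → W₁.d 0 = w'.d 1 := fun ht => (hW₁pos ht).2
    have hW₁poslen : 0 < W₁.len → 0 < w'.tail.len := by
      intro hl
      by_contra hc
      have : w'.tail.len = 0 := by omega
      have := hW₁nil this
      omega
    cases hd0 : w'.d 0 with
    | true =>
      have hE01 : E' (w'.v 0) (w'.v 1) := hvalid0.1 hd0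
      have hht : HT E C W₁ := by
        intro hl
        have ht := hW₁poslen hl
        have hd1 := hW₁d ht
        constructor
        · intro hf
          have hdf : w'.d 1 = false := by rw [← hd1]; exact hf
          have := hcolAnc ht ⟨hd0, hdf⟩
          rw [hW₁0']
          exact ancOfSet'_to_ancOfSet h this
        · intro htt
          left
          have hdt : w'.d 1 = true := by rw [← hd1]; exact htt
          rw [hW₁0']
          exact hnotC ht (by rintro ⟨_, hf⟩; rw [hdt] at hf; simp at hf)
      by_cases hin : InSC E (w'.v 0) (w'.v 1)
      · obtain ⟨W', h0, hend, hop', _, _, hdisj⟩ :=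
          pp_fwd hin.1 (w'.v 1) Relation.ReflTransGen.refl hin.2 W₁ hW₁0' hW₁op hht
        have hne : w'.v 0 ≠ w'.v 1 := by
          intro heq
          rw [← heq] at hE01
          exact h.1 (w'.v 0) (Relation.TransGen.single hE01)
        rcases hdisj with ⟨hab, _⟩ | ⟨hpos'', hd'⟩
        · exact absurd hab hne
        · exact ⟨W', h0, by rw [hend, hend1], hop', fun h0' => by omega,
            fun _ => ⟨hpos'', hd'⟩⟩
      · obtain ⟨k, hkSC, hek⟩ := (h.2.1 _ _ hin).mp hE01
        obtain ⟨Wk, hk0, hkend, hkop, hkht, _, _⟩ :=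
          pp_fwd hkSC.1 (w'.v 1) Relation.ReflTransGen.refl hkSC.2 W₁ hW₁0' hW₁op hht
        have h1 : (true : Bool) = true → E (w'.v 0) (Wk.v 0) := fun _ => by rw [hk0]; exact hek
        have h2 : (true : Bool) = false → E (Wk.v 0) (w'.v 0) := fun hf => by simp at hf
        refine ⟨Walk.cons (w'.v 0) true Wk h1 h2, rfl, ?_, ?_, fun h0' => by omega,
          fun _ => ⟨by simp, rfl⟩⟩
        · show Wk.v Wk.len = w'.v w'.len
          rw [hkend, hend1]
        · refine IntOpenS_cons hkop ?_
          intro hl hbad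
          rw [SBad_cons_one] at hbad
          obtain ⟨hdf, hdt⟩ := hkht hl
          rcases hbad with ⟨⟨_, hf⟩, hna⟩ | ⟨hmem, hpat⟩
          · exact hna (hdf hf)
          · rcases hpat with ⟨_, ht', hnin⟩ | ⟨hf, _, _⟩ | ⟨hf, _, _⟩
            · rcases hdt ht' with hnc | hin'
              · exact hnc hmem
              · exact hnin hin'
            · simp at hf
            · simp at hf
    | false =>
      have hE10 : E' (w'.v 1) (w'.v 0) := hvalid0.2 hd0
      have hx1C : 0 < w'.tail.len → w'.v 1 ∉ C := by
        intro ht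
        exact hnotC ht (by rintro ⟨hf, _⟩; rw [hd0] at hf; simp at hf)
      by_cases hin : InSC E (w'.v 1) (w'.v 0)
      · have hhb : HB E C W₁ (w'.v 0) := by
          intro hl
          left
          rw [hW₁0']
          exact hx1C (hW₁poslen hl)
        obtain ⟨W', h0, hend, hop', _, hdisj⟩ := pp_bwd hin.1 hin.2 W₁ hW₁0' hW₁op hhb
        have hne : w'.v 1 ≠ w'.v 0 := by
          intro heq
          rw [heq] at hE10
          exact h.1 (w'.v 0) (Relation.TransGen.single hE10)
        rcases hdisj with ⟨hab, _⟩ | ⟨hpos'', hd'⟩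
        · exact absurd hab hne
        · exact ⟨W', h0, by rw [hend, hend1], hop', fun h0' => by omega,
            fun _ => ⟨hpos'', hd'⟩⟩
      · obtain ⟨k, hkSC, hek⟩ := (h.2.1 _ _ hin).mp hE10
        have h1 : (false : Bool) = true → E k (W₁.v 0) := fun hf => by simp at hf
        have h2 : (false : Bool) = false → E (W₁.v 0) k := fun _ => by rw [hW₁0']; exact hek
        have hopk : IntOpenS E C (Walk.cons k false W₁ h1 h2) := by
          refine IntOpenS_cons hW₁op ?_
          intro hl hbad
          rw [SBad_cons_one] at hbad
          rcases hbad with ⟨⟨hf, _⟩, _⟩ | ⟨hmem, _⟩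
          · simp at hf
          · rw [hW₁0'] at hmem
            exact hx1C (hW₁poslen hl) hmem
        have hhbk : HB E C (Walk.cons k false W₁ h1 h2) (w'.v 0) := by
          intro _
          exact Or.inr ⟨rfl, hkSC⟩
        obtain ⟨W', h0, hend, hop', hpos', hdisj⟩ :=
          pp_bwd hkSC.1 hkSC.2 (Walk.cons k false W₁ h1 h2) rfl hopk hhbk
        have hfin : 0 < W'.len ∧ W'.d 0 = false := by
          rcases hdisj with ⟨_, hlen'', hd'⟩ | hfin
          · exact ⟨by rw [hlen'']; simp, by rw [hd' (by simp)]; rfl⟩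
          · exact hfin
        refine ⟨W', h0, ?_, hop', fun h0' => by omega, fun _ => ⟨hfin.1, hfin.2⟩⟩
        rw [hend]
        show W₁.v W₁.len = w'.v w'.len
        exact hend1

end Dir1

/-! ### Direction 2: a σ-open walk in `G` yields a d-open walk in `G'` -/

section Dir2

variable {V : Type*} {E E' : V → V → Prop} {C : Set V}

lemma sigma_notC_right {w : Walk E} (hop : IntOpenS E C w) {k : ℕ}
    (hk1 : 0 < k) (hk2 : k < w.len) (hdk : w.d k = true)
    (hnin : ¬ InSC E (w.v (k + 1)) (w.v k)) : w.v k ∉ C := by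
  intro hmem
  refine hop k hk1 hk2 (Or.inr ⟨hmem, ?_⟩)
  cases hdk1 : w.d (k - 1) with
  | true => exact Or.inl ⟨rfl, hdk, hnin⟩
  | false => exact Or.inr (Or.inr ⟨rfl, hdk, Or.inr hnin⟩)

lemma sigma_notC_left {w : Walk E} (hop : IntOpenS E C w) {k : ℕ}
    (hk1 : 0 < k) (hk2 : k < w.len) (hdk1 : w.d (k - 1) = false)
    (hnin : ¬ InSC E (w.v (k - 1)) (w.v k)) : w.v k ∉ C := by
  intro hmem
  refine hop k hk1 hk2 (Or.inr ⟨hmem, ?_⟩)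
  cases hdk : w.d k with
  | true => exact Or.inr (Or.inr ⟨hdk1, rfl, Or.inl hnin⟩)
  | false => exact Or.inr (Or.inl ⟨hdk1, rfl, hnin⟩)

/-- Prepend a node to a d-open walk keeping d-openness, given the junction condition. -/
lemma cons_open_d {W : Walk E'} {x : V} {b : Bool}
    {h1 : b = true → E' x (W.v 0)} {h2 : b = false → E' (W.v 0) x}
    (hop : IntOpenD E' C W)
    (hj : 0 < W.len →
      (((b = true ∧ W.d 0 = false) → AncOfSet E' C (W.v 0)) ∧
       (¬ (b = true ∧ W.d 0 = false) → W.v 0 ∉ C))) :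
    IntOpenD E' C (Walk.cons x b W h1 h2) := by
  refine IntOpenD_cons hop ?_
  intro hl hbad
  rw [DBad_cons_one] at hbad
  obtain ⟨hA, hB⟩ := hj hl
  rcases hbad with ⟨hc, hna⟩ | ⟨hnc, hm⟩
  · exact hna (hA hc)
  · exact hB hnc hm

lemma dir2core [Fintype V] (h : IsAcyclification E E') (w : Walk E)
    (hop : IntOpenS E C w) (hx : w.v 0 ∉ C) (hy : w.v w.len ∉ C) :
    ∀ (dlt k0 : ℕ), k0 + dlt = w.len →
      ((∀ s', InSC E s' (w.v k0) → s' ∉ C →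
          ∃ W : Walk E', W.v 0 = s' ∧ W.v W.len = w.v w.len ∧ IntOpenD E' C W) ∧
       (∀ j, j < k0 → w.d j = true → ¬ InSC E (w.v (j + 1)) (w.v j) →
          (∀ i, j < i → i < k0 → InSC E (w.v (i + 1)) (w.v i)) →
          ∃ s, InSC E s (w.v k0) ∧ ∃ W : Walk E', W.v 0 = s ∧ W.v W.len = w.v w.len ∧
            IntOpenD E' C W ∧
            (W.len = 0 ∨ (W.d 0 = true ∧ W.v 0 ∉ C) ∨
              (W.d 0 = false ∧ AncOfSet E' C (W.v 0))))) := by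
  classical
  intro dlt
  induction dlt with
  | zero =>
    intro k0 hk
    have hk0 : k0 = w.len := by omega
    constructor
    · intro s' hs' hs'C
      by_cases he : s' = w.v k0
      · refine ⟨Walk.nil E' s', rfl, ?_, ?_⟩
        · show s' = w.v w.len
          rw [he, hk0]
        · intro k hk1 hk2; simp at hk2
      · rcases h.2.2 s' (w.v k0) he hs' with he' | he'
        · refine ⟨Walk.cons s' true (Walk.nil E' (w.v k0)) (fun _ => he')
            (fun hf => by simp at hf), rfl, ?_, ?_⟩
          · show w.v k0 = w.v w.len
            rw [hk0]
          · intro k hk1 hk2; change k < 0 + 1 at hk2; omega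
        · refine ⟨Walk.cons s' false (Walk.nil E' (w.v k0)) (fun hf => by simp at hf)
            (fun _ => he'), rfl, ?_, ?_⟩
          · show w.v k0 = w.v w.len
            rw [hk0]
          · intro k hk1 hk2; change k < 0 + 1 at hk2; omega
    · intro j _ _ _ _
      refine ⟨w.v k0, InSC.refl E _, Walk.nil E' (w.v k0), rfl, ?_, ?_, Or.inl rfl⟩
      · show w.v k0 = w.v w.len
        rw [hk0]
      · intro k hk1 hk2; simp at hk2
  | succ dlt ihd =>
    intro k0 hk
    have hk0len : k0 < w.len := by omega
    obtain ⟨IHA', IHA⟩ := ihd (k0 + 1) (by omega)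
    have hvalid := w.valid k0 hk0len
    by_cases hinedge : InSC E (w.v (k0 + 1)) (w.v k0)
    · -- intra-SC edge: pass through
      constructor
      · intro s' hs' hs'C
        exact IHA' s' (hs'.trans hinedge.symm) hs'C
      · intro j hj hdj hcrossj hintra
        obtain ⟨s, hsSC, rest⟩ := IHA j (by omega) hdj hcrossj (by
          intro i hi1 hi2
          by_cases hik : i = k0
          · rw [hik]; exact hinedge
          · exact hintra i hi1 (by omega))
        exact ⟨s, hsSC.trans hinedge, rest⟩
    · -- cross edge
      cases hd0 : w.d k0 with
      | true =>
        have heab : E (w.v k0) (w.v (k0 + 1)) := hvalid.1 hd0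
        have haC : w.v k0 ∉ C := by
          rcases Nat.eq_zero_or_pos k0 with h0 | hpos
          · rw [h0]; exact hx
          · exact sigma_notC_right hop hpos hk0len hd0 hinedge
        obtain ⟨t, htSC, W₁, hW₁0, hW₁end, hW₁op, hW₁pkg⟩ :=
          IHA k0 (by omega) hd0 hinedge (fun i hi1 hi2 => by omega)
        have hE'at : E' (w.v k0) t := by
          have hnat : ¬ InSC E (w.v k0) t := fun hcon => hinedge ((hcon.trans htSC).symm)
          exact (h.2.1 _ _ hnat).mpr ⟨w.v (k0 + 1), htSC.symm, heab⟩
        obtain ⟨Wa, hWa0, hWaend, hWaop, hWad0, hWapos⟩ :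
            ∃ Wa : Walk E', Wa.v 0 = w.v k0 ∧ Wa.v Wa.len = w.v w.len ∧
              IntOpenD E' C Wa ∧ Wa.d 0 = true ∧ 0 < Wa.len := by
          refine ⟨Walk.cons (w.v k0) true W₁ (fun _ => by rw [hW₁0]; exact hE'at)
            (fun hf => by simp at hf), rfl, hW₁end, ?_, rfl, by simp⟩
          refine cons_open_d hW₁op ?_
          intro hl
          rcases hW₁pkg with hzero | hpkg
          · omega
          constructor
          · intro ⟨_, hdf⟩
            rcases hpkg with ⟨hdt, _⟩ | ⟨_, hanc⟩
            · rw [hdt] at hdf; simp at hdf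
            · exact hanc
          · intro hnc
            rcases hpkg with ⟨_, hnotC⟩ | ⟨hdf, _⟩
            · exact hnotC
            · exact absurd ⟨rfl, hdf⟩ hnc
        constructor
        · intro s' hs' hs'C
          by_cases hsa : s' = w.v k0
          · exact ⟨Wa, by rw [hWa0, hsa], hWaend, hWaop⟩
          · rcases h.2.2 s' (w.v k0) hsa hs' with he' | he'
            · refine ⟨Walk.cons s' true Wa (fun _ => by rw [hWa0]; exact he')
                (fun hf => by simp at hf), rfl, hWaend, ?_⟩
              refine cons_open_d hWaop ?_
              intro _
              constructor
              · intro ⟨_, hdf⟩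
                rw [hWad0] at hdf; simp at hdf
              · intro _
                rw [hWa0]; exact haC
            · refine ⟨Walk.cons s' false Wa (fun hf => by simp at hf)
                (fun _ => by rw [hWa0]; exact he'), rfl, hWaend, ?_⟩
              refine cons_open_d hWaop ?_
              intro _
              constructor
              · intro ⟨hf, _⟩; simp at hf
              · intro _
                rw [hWa0]; exact haC
        · intro j hj hdj hcrossj hintra
          refine ⟨w.v k0, InSC.refl E _, Wa, hWa0, hWaend, hWaop,
            Or.inr (Or.inl ⟨hWad0, ?_⟩)⟩
          rw [hWa0]; exact haC
      | false =>
        have heba : E (w.v (k0 + 1)) (w.v k0) := hvalid.2 hd0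
        have hbC : w.v (k0 + 1) ∉ C := by
          by_cases hN : k0 + 1 = w.len
          · rw [hN]; exact hy
          · refine sigma_notC_left hop (k := k0 + 1) (by omega) (by omega) ?_ ?_
            · show w.d k0 = false; exact hd0
            · show ¬ InSC E (w.v k0) (w.v (k0 + 1))
              exact fun hc => hinedge hc.symm
        obtain ⟨W₂, hW₂0, hW₂end, hW₂op⟩ := IHA' (w.v (k0 + 1)) (InSC.refl E _) hbC
        have hE'b : ∀ s, InSC E s (w.v k0) → E' (w.v (k0 + 1)) s := by
          intro s hs
          have hnbs : ¬ InSC E (w.v (k0 + 1)) s := fun hcon => hinedge (hcon.trans hs)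
          exact (h.2.1 _ _ hnbs).mpr ⟨w.v k0, hs.symm, heba⟩
        constructor
        · intro s' hs' hs'C
          refine ⟨Walk.cons s' false W₂ (fun hf => by simp at hf)
            (fun _ => by rw [hW₂0]; exact hE'b s' hs'), rfl, hW₂end, ?_⟩
          refine cons_open_d hW₂op ?_
          intro _
          refine ⟨fun ⟨hf, _⟩ => by simp at hf, fun _ => ?_⟩
          rw [hW₂0]; exact hbC
        · intro j hj hdj hcrossj hintra
          have hQex : ∃ i, j < i ∧ w.d i = false := ⟨k0, hj, hd0⟩
          have hpspec : j < Nat.find hQex ∧ w.d (Nat.find hQex) = false := Nat.find_spec hQex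
          have hple : Nat.find hQex ≤ k0 := Nat.find_min' hQex ⟨hj, hd0⟩
          have hdp1 : w.d (Nat.find hQex - 1) = true := by
            by_cases hpj : Nat.find hQex - 1 = j
            · rw [hpj]; exact hdj
            · have hlt : Nat.find hQex - 1 < Nat.find hQex := by omega
              have hnot := Nat.find_min hQex hlt
              have hjlt : j < Nat.find hQex - 1 := by omega
              cases hdp : w.d (Nat.find hQex - 1) with
              | false => exact absurd ⟨hjlt, hdp⟩ hnot
              | true => rfl
          have hcolp : IsCollider w (Nat.find hQex) := ⟨hdp1, hpspec.2⟩
          have hanc : AncOfSet E C (w.v (Nat.find hQex)) := by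
            by_contra hna
            exact hop (Nat.find hQex) (by omega) (by omega) (Or.inl ⟨hcolp, hna⟩)
          have hchain : ∀ t m, j < m → m + t = k0 → InSC E (w.v m) (w.v k0) := by
            intro t
            induction t with
            | zero =>
              intro m _ hm
              rw [show m = k0 by omega]
              exact InSC.refl E _
            | succ t iht =>
              intro m hm1 hm2
              have h1 : InSC E (w.v (m + 1)) (w.v m) := hintra m hm1 (by omega)
              exact h1.symm.trans (iht (m + 1) (by omega) (by omega))
          have hpSC : InSC E (w.v (Nat.find hQex)) (w.v k0) :=
            hchain (k0 - Nat.find hQex) (Nat.find hQex) hpspec.1 (by omega)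
          obtain ⟨m, hmSC, hmmin⟩ := exists_min h (w.v k0)
          have hmanc : AncOfSet E' C m := by
            obtain ⟨c, hcC, hancc⟩ := hanc
            exact ⟨c, hcC, min_anc' h hancc m (hmSC.trans hpSC.symm) hmmin⟩
          refine ⟨m, hmSC, Walk.cons m false W₂ (fun hf => by simp at hf)
            (fun _ => by rw [hW₂0]; exact hE'b m hmSC), rfl, hW₂end, ?_,
            Or.inr (Or.inr ⟨rfl, hmanc⟩)⟩
          refine cons_open_d hW₂op ?_
          intro _
          refine ⟨fun ⟨hf, _⟩ => by simp at hf, fun _ => ?_⟩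
          rw [hW₂0]; exact hbC

end Dir2

/-! ### Putting everything together -/

section Final

variable {V : Type*} {E E' : V → V → Prop}

lemma sigmaSep_to_dSep (h : IsAcyclification E E') {A B C : Set V}
    (hs : SigmaSep E A B C) : DSep E' A B C := by
  intro w' hA hB
  by_contra hnb
  obtain ⟨hx, hy, hop⟩ := (not_DBlocked_iff E' C w').mp hnb
  obtain ⟨W, h0, hend, hopS, _, _⟩ := dir1 h w'.len w' rfl hop
  have hblocked := hs W (by rw [h0]; exact hA) (by rw [hend]; exact hB)
  exact (not_SigmaBlocked_iff E C W).mpr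
    ⟨by rw [h0]; exact hx, by rw [hend]; exact hy, hopS⟩ hblocked

lemma dSep_to_sigmaSep [Fintype V] (h : IsAcyclification E E') {A B C : Set V}
    (hd : DSep E' A B C) : SigmaSep E A B C := by
  intro w hA hB
  by_contra hnb
  obtain ⟨hx, hy, hop⟩ := (not_SigmaBlocked_iff E C w).mp hnb
  obtain ⟨HA', _⟩ := dir2core h w hop hx hy w.len 0 (by omega)
  obtain ⟨W, h0, hend, hopD⟩ := HA' (w.v 0) (InSC.refl E _) hx
  have hblocked := hd W (by rw [h0]; exact hA) (by rw [hend]; exact hB)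
  exact (not_DBlocked_iff E' C W).mpr
    ⟨by rw [h0]; exact hx, by rw [hend]; exact hy, hopD⟩ hblocked

lemma sigmaSep'_iff_dSep' (hac : Acyclic E') (A B C : Set V) :
    SigmaSep E' A B C ↔ DSep E' A B C := by
  constructor
  · intro hs w hA hB
    exact (SigmaBlocked_iff_DBlocked_acyclic hac w).mp (hs w hA hB)
  · intro hd w hA hB
    exact (SigmaBlocked_iff_DBlocked_acyclic hac w).mpr (hd w hA hB)

end Final

/-- For any finite directed graph `G` (possibly cyclic) and any
acyclification `G'` of `G`, `IM_σ(G) = IM_σ(G') = IM_d(G')`; i.e. for all subsets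
`A, B, C` of the vertex set, σ-separation in `G`, σ-separation in `G'`, and
d-separation in `G'` all coincide. -/
theorem acyclification_independence_models {V : Type*} [Fintype V]
    (E E' : V → V → Prop) (hE : ∀ v, ¬ E v v)
    (h : IsAcyclification E E') :
    IMsigma E = IMsigma E' ∧ IMsigma E' = IMd E' ∧
    ∀ A B C : Set V,
      (SigmaSep E A B C ↔ SigmaSep E' A B C) ∧
      (SigmaSep E' A B C ↔ DSep E' A B C) := by
  have key2 : ∀ A B C : Set V, SigmaSep E' A B C ↔ DSep E' A B C :=
    sigmaSep'_iff_dSep' h.1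
  have key1 : ∀ A B C : Set V, SigmaSep E A B C ↔ SigmaSep E' A B C := by
    intro A B C
    constructor
    · intro hs
      exact (key2 A B C).mpr (sigmaSep_to_dSep h hs)
    · intro hs
      exact dSep_to_sigmaSep h ((key2 A B C).mp hs)
  exact ⟨Set.ext fun t => key1 t.1 t.2.1 t.2.2, Set.ext fun t => key2 t.1 t.2.1 t.2.2,
    fun A B C => ⟨key1 A B C, key2 A B C⟩⟩
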